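/- Let S ⊂ A ⊂ K^m, let f : A → K^n, and let 0 < R < ∞ and 0 < C < ∞ be such that for every z ∈ S one has B(K^m,z,R) ⊂ A and |f(x) − f(z)| ≤ C|x − z| for each x ∈ B(K^m,z,R). Suppose y ∈ S, the complement K^m \ S has μ^m density 0 at every point z of some neighborhood U_y of y, and f is approximately differentiable at y with approximate derivative L. Then f is differentiable at y with derivative L: lim_{A ∋ x → y} |f(x) − f(y) − L(x − y)|/|x − y| = 0. -/

import Mathlib

open MeasureTheory Metric Set Filter Topology Pointwise

/-- A set `S` has `ν` density `0` (in dimension `d`) at a point `z`, where the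
radii run through the value group `Γ_K = {‖x‖ : x ∈ K, x ≠ 0}`. -/
def densityZeroAt (K : Type*) [NontriviallyNormedField K] {E : Type*}
    [SeminormedAddCommGroup E] [MeasurableSpace E] (ν : Measure E) (d : ℕ)
    (S : Set E) (z : E) : Prop :=
  Filter.Tendsto (fun R : ℝ => ν (S ∩ Metric.closedBall z R) / ENNReal.ofReal (R ^ d))
    (𝓝[{R : ℝ | ∃ x : K, x ≠ 0 ∧ ‖x‖ = R}] 0) (𝓝 0)

/-- Ultrametric triangle inequality in a product of ultrametric spaces. -/
lemma pi_dist_triangle_max {K : Type*} [PseudoMetricSpace K] [IsUltrametricDist K] {m : ℕ}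
    (x y z : Fin m → K) : dist x z ≤ max (dist x y) (dist y z) := by
  refine (dist_pi_le_iff (le_max_of_le_left dist_nonneg)).mpr fun i => ?_
  exact (IsUltrametricDist.dist_triangle_max (x i) (y i) (z i)).trans
    (max_le_max (dist_le_pi_dist x y i) (dist_le_pi_dist y z i))

/-- Lemma 16. Let `S ⊆ A ⊆ K^m`, `f : A → K^n`,
`0 < R < ∞`, `0 < C < ∞` be such that for every `z ∈ S` one has
`B(z,R) ⊆ A` and `‖f x - f z‖ ≤ C ‖x - z‖` for all `x ∈ B(z,R)`.  If `y ∈ S`,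
the complement of `S` has `μ^m` density `0` at every point of a neighborhood
`U_y` of `y`, and `f` is approximately differentiable at `y` with approximate
derivative `L`, then `f` is differentiable at `y` with derivative `L`:
`‖f x - f y - L (x - y)‖ / ‖x - y‖ → 0` as `x → y` within `A`. -/
theorem stmt9 {K : Type*} [NontriviallyNormedField K] [IsUltrametricDist K]
    [LocallyCompactSpace K] [MeasurableSpace K] [BorelSpace K]
    (μ : Measure K) [μ.IsAddHaarMeasure]
    (hμ1 : μ (closedBall (0 : K) 1) = 1)
    (hμs : ∀ (a : K) (A : Set K), μ (a • A) = (‖a‖₊ : ENNReal) * μ A)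
    {m n : ℕ}
    (S A : Set (Fin m → K)) (hSA : S ⊆ A)
    (f : (Fin m → K) → (Fin n → K))
    (R C : ℝ) (hR : 0 < R) (hC : 0 < C)
    (hball : ∀ z ∈ S, closedBall z R ⊆ A ∧
      ∀ x ∈ closedBall z R, ‖f x - f z‖ ≤ C * ‖x - z‖)
    (y : Fin m → K) (hy : y ∈ S)
    (Uy : Set (Fin m → K)) (hUy : Uy ∈ 𝓝 y)
    (hdens : ∀ z ∈ Uy, densityZeroAt K (Measure.pi fun _ : Fin m => μ) m Sᶜ z)
    (L : (Fin m → K) →ₗ[K] (Fin n → K))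
    (hap : ∀ ε : ℝ, 0 < ε →
      densityZeroAt K (Measure.pi fun _ : Fin m => μ) m
        {z : Fin m → K | ε * ‖z - y‖ < ‖f z - f y - L (z - y)‖} y) :
    Filter.Tendsto (fun x : Fin m → K => ‖f x - f y - L (x - y)‖ / ‖x - y‖)
      (𝓝[A \ {y}] y) (𝓝 0) := by
  classical
  rcases Nat.eq_zero_or_pos m with hm | hm
  · subst hm
    have hempty : A \ ({y} : Set (Fin 0 → K)) = ∅ := by
      ext x
      simp [Subsingleton.elim x y]
    rw [hempty, nhdsWithin_empty]
    exact tendsto_bot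
  haveI : Nonempty (Fin m) := ⟨⟨0, hm⟩⟩
  haveI : ProperSpace K := .of_locallyCompactSpace K
  set ν : Measure (Fin m → K) := Measure.pi fun _ : Fin m => μ with hνdef
  -- measure of closed balls in K
  have hballK : ∀ (a c : K), c ≠ 0 → μ (closedBall a ‖c‖) = (‖c‖₊ : ENNReal) := by
    intro a c hc
    have h1 : closedBall a ‖c‖ = a +ᵥ (c • closedBall (0 : K) 1) := by
      rw [smul_closedBall' hc, smul_zero, mul_one, Metric.vadd_closedBall, vadd_eq_add, add_zero]
    rw [h1, measure_vadd, hμs, hμ1, mul_one]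
  -- measure of closed balls in K^m
  have hballm : ∀ (z : Fin m → K) (c : K), c ≠ 0 →
      ν (closedBall z ‖c‖) = ENNReal.ofReal (‖c‖ ^ m) := by
    intro z c hc
    rw [hνdef, closedBall_pi z (norm_nonneg c), Measure.pi_pi]
    simp only [hballK _ c hc, Finset.prod_const, Finset.card_univ, Fintype.card_fin]
    rw [ENNReal.ofReal_pow (norm_nonneg _), ofReal_norm, enorm_eq_nnnorm]
  -- norms of nonzero elements of K^m lie in the value group
  have hmem : ∀ x : Fin m → K, x ≠ y → ∃ d : K, d ≠ 0 ∧ ‖d‖ = ‖x - y‖ := by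
    intro x hxy
    obtain ⟨j, -, hj⟩ := Finset.exists_mem_eq_sup Finset.univ Finset.univ_nonempty
      (fun i => ‖x i - y i‖₊)
    have h1 : ‖x - y‖₊ = ‖x j - y j‖₊ := by
      rw [Pi.nnnorm_def]
      simpa only [Pi.sub_apply] using hj
    refine ⟨x j - y j, ?_, ?_⟩
    · intro h
      apply hxy
      have : ‖x - y‖₊ = 0 := by rw [h1, h, nnnorm_zero]
      have := nnnorm_eq_zero.mp this
      exact sub_eq_zero.mp this
    · have := congrArg (fun t : NNReal => (t : ℝ)) h1
      simpa [coe_nnnorm] using this.symm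
  -- the linear map is bounded
  let T : (Fin m → K) →L[K] (Fin n → K) := LinearMap.toContinuousLinearMap L
  set M := ‖T‖ with hMdef
  have hM0 : 0 ≤ M := norm_nonneg T
  have hL : ∀ v, ‖L v‖ ≤ M * ‖v‖ := fun v => T.le_opNorm v
  rw [Metric.tendsto_nhds]
  intro ε hε
  -- choose the small scaling factor θ = ‖c‖
  have hmin : 0 < min 1 (ε / (2 * (C + M + 1))) := by
    refine lt_min one_pos (div_pos hε (by positivity))
  obtain ⟨c, hc0, hcθ⟩ := NormedField.exists_norm_lt K hmin
  set θ := ‖c‖ with hθdef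
  have hθ1 : θ < 1 := hcθ.trans_le (min_le_left _ _)
  have hθ2 : θ < ε / (2 * (C + M + 1)) := hcθ.trans_le (min_le_right _ _)
  have hcne : c ≠ 0 := norm_pos_iff.mp hc0
  set δ : ENNReal := ENNReal.ofReal (θ ^ m) / 2 with hδdef
  have hδ : 0 < δ := ENNReal.div_pos (ENNReal.ofReal_pos.mpr (pow_pos hc0 m)).ne' (by norm_num)
  -- density hypotheses
  have hS0 : Filter.Tendsto
      (fun r : ℝ => ν (Sᶜ ∩ Metric.closedBall y r) / ENNReal.ofReal (r ^ m))
      (𝓝[{r : ℝ | ∃ x : K, x ≠ 0 ∧ ‖x‖ = r}] 0) (𝓝 0) := hdens y (mem_of_mem_nhds hUy)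
  set E : Set (Fin m → K) :=
    {z : Fin m → K | ε / 2 * ‖z - y‖ < ‖f z - f y - L (z - y)‖} with hEdef
  have hE0 : Filter.Tendsto
      (fun r : ℝ => ν (E ∩ Metric.closedBall y r) / ENNReal.ofReal (r ^ m))
      (𝓝[{r : ℝ | ∃ x : K, x ≠ 0 ∧ ‖x‖ = r}] 0) (𝓝 0) := hap (ε / 2) (half_pos hε)
  have hS' := hS0.eventually (gt_mem_nhds hδ)
  have hE' := hE0.eventually (gt_mem_nhds hδ)
  -- the norm map tends to 0 within the value group
  have ht0 : Filter.Tendsto (fun x : Fin m → K => ‖x - y‖) (𝓝[A \ {y}] y) (𝓝 0) := by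
    have : Filter.Tendsto (fun x : Fin m → K => ‖x - y‖) (𝓝 y) (𝓝 ‖y - y‖) :=
      ((continuous_id.sub continuous_const).norm.tendsto y)
    simpa [sub_self] using this.mono_left nhdsWithin_le_nhds
  have htend : Filter.Tendsto (fun x : Fin m → K => ‖x - y‖) (𝓝[A \ {y}] y)
      (𝓝[{r : ℝ | ∃ x : K, x ≠ 0 ∧ ‖x‖ = r}] 0) := by
    rw [tendsto_nhdsWithin_iff]
    refine ⟨ht0, ?_⟩
    filter_upwards [self_mem_nhdsWithin] with x hx
    obtain ⟨d, hd0, hdr⟩ := hmem x fun h => hx.2 (by simp [h])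
    exact ⟨d, hd0, hdr⟩
  filter_upwards [htend.eventually hS', htend.eventually hE',
    ht0.eventually (gt_mem_nhds hR), self_mem_nhdsWithin] with x hx1 hx2 hxR hxA
  have hxy : x ≠ y := fun h => hxA.2 (by simp [h])
  set r := ‖x - y‖ with hrdef
  have hr0 : 0 < r := norm_pos_iff.mpr (sub_ne_zero.mpr hxy)
  obtain ⟨d, hd0, hdr⟩ := hmem x hxy
  have hθr : θ * r ≤ r := by
    nlinarith
  -- measure of the small ball around x
  have hcd : c * d ≠ 0 := mul_ne_zero hcne hd0
  have hcdn : ‖c * d‖ = θ * r := by rw [norm_mul, hdr]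
  have hballx : ν (closedBall x (θ * r)) = ENNReal.ofReal ((θ * r) ^ m) := by
    rw [← hcdn]
    exact hballm x (c * d) hcd
  have hb0 : ENNReal.ofReal (r ^ m) ≠ 0 := (ENNReal.ofReal_pos.mpr (pow_pos hr0 m)).ne'
  have hbt : ENNReal.ofReal (r ^ m) ≠ ⊤ := ENNReal.ofReal_ne_top
  have h1 : ν (Sᶜ ∩ closedBall y r) < δ * ENNReal.ofReal (r ^ m) :=
    (ENNReal.div_lt_iff (Or.inl hb0) (Or.inl hbt)).mp hx1
  have h2 : ν (E ∩ closedBall y r) < δ * ENNReal.ofReal (r ^ m) :=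
    (ENNReal.div_lt_iff (Or.inl hb0) (Or.inl hbt)).mp hx2
  have hsum : ν (Sᶜ ∩ closedBall y r) + ν (E ∩ closedBall y r)
      < ENNReal.ofReal ((θ * r) ^ m) := by
    calc ν (Sᶜ ∩ closedBall y r) + ν (E ∩ closedBall y r)
        < δ * ENNReal.ofReal (r ^ m) + δ * ENNReal.ofReal (r ^ m) :=
          ENNReal.add_lt_add h1 h2
      _ = (δ + δ) * ENNReal.ofReal (r ^ m) := by ring
      _ = ENNReal.ofReal (θ ^ m) * ENNReal.ofReal (r ^ m) := by
          rw [hδdef, ENNReal.add_halves]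
      _ = ENNReal.ofReal ((θ * r) ^ m) := by
          rw [← ENNReal.ofReal_mul (pow_nonneg hc0.le m), ← mul_pow]
  have hsub : closedBall x (θ * r) ⊆ closedBall y r := by
    intro w hw
    have h3 := pi_dist_triangle_max w x y
    have h4 : dist w x ≤ θ * r := mem_closedBall.mp hw
    have h5 : dist x y = r := by rw [dist_eq_norm]
    exact mem_closedBall.mpr (h3.trans (max_le (h4.trans hθr) h5.le))
  have hnot : ¬ closedBall x (θ * r) ⊆ Sᶜ ∪ E := by
    intro hbad
    have hle : ν (closedBall x (θ * r))
        ≤ ν (Sᶜ ∩ closedBall y r) + ν (E ∩ closedBall y r) := by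
      refine le_trans (measure_mono ?_) (measure_union_le _ _)
      intro w hw
      rcases hbad hw with h | h
      · exact Or.inl ⟨h, hsub hw⟩
      · exact Or.inr ⟨h, hsub hw⟩
    rw [hballx] at hle
    exact absurd (hle.trans_lt hsum) (lt_irrefl _)
  obtain ⟨z, hzball, hz2⟩ := not_subset.mp hnot
  have hzS : z ∈ S := by
    by_contra h
    exact hz2 (Or.inl h)
  have hzE : z ∉ E := fun h => hz2 (Or.inr h)
  have hzx : ‖z - x‖ ≤ θ * r := by
    rw [← dist_eq_norm]; exact mem_closedBall.mp hzball
  have hzy : ‖z - y‖ ≤ r := by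
    rw [← dist_eq_norm]; exact mem_closedBall.mp (hsub hzball)
  have hxz : x ∈ closedBall z R := by
    rw [mem_closedBall, dist_comm, dist_eq_norm]
    exact hzx.trans (hθr.trans hxR.le)
  have lip : ‖f x - f z‖ ≤ C * (θ * r) := by
    refine ((hball z hzS).2 x hxz).trans ?_
    rw [norm_sub_rev]
    exact mul_le_mul_of_nonneg_left hzx hC.le
  have apz : ‖f z - f y - L (z - y)‖ ≤ ε / 2 * r := by
    have h6 : ¬ (ε / 2 * ‖z - y‖ < ‖f z - f y - L (z - y)‖) := hzE
    refine (not_lt.mp h6).trans ?_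
    exact mul_le_mul_of_nonneg_left hzy (half_pos hε).le
  have lin : ‖L (z - x)‖ ≤ M * (θ * r) :=
    (hL _).trans (mul_le_mul_of_nonneg_left hzx hM0)
  have hdecomp : f x - f y - L (x - y)
      = (f x - f z) + ((f z - f y - L (z - y)) + L (z - x)) := by
    simp only [map_sub]
    abel
  have htot : ‖f x - f y - L (x - y)‖ ≤ C * (θ * r) + (ε / 2 * r + M * (θ * r)) := by
    rw [hdecomp]
    exact (norm_add_le _ _).trans
      (add_le_add lip ((norm_add_le _ _).trans (add_le_add apz lin)))
  rw [Real.dist_eq, sub_zero, abs_of_nonneg (div_nonneg (norm_nonneg _) (norm_nonneg _))]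
  rw [div_lt_iff₀ hr0]
  calc ‖f x - f y - L (x - y)‖ ≤ C * (θ * r) + (ε / 2 * r + M * (θ * r)) := htot
    _ = ((C + M) * θ + ε / 2) * r := by ring
    _ < ε * r := by
      have hd2 : θ * (2 * (C + M + 1)) < ε := (lt_div_iff₀ (by positivity)).mp hθ2
      nlinarith
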